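/- Let R be a (not necessarily commutative) ring, let w be a central element of R, and let d, e, h ∈ R satisfy d² = 0, e² = 0, d·e + e·d = w, d·h + h·d = 1, and suppose (h·e)^N = 0 for some natural number N. For ℓ ≥ 0 set H_ℓ := (−1)^ℓ · Σ_{j₁+j₂=ℓ} (h·e)^{j₁} · h · (h·e)^{j₂} ∈ R (so H_ℓ = 0 for ℓ ≥ 2N). Then in the polynomial ring R[u] (with u a central variable), writing Δ := d + e·u and H := Σ_{ℓ=0}^{2N−1} H_ℓ·u^ℓ (coefficients viewed in R[u] via the canonical ring map), one has Δ·H + H·Δ = 1. -/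
import Mathlib


open Finset Polynomial

section CurvedAux

variable {R : Type*} [Ring R]

/-- The unsigned homotopy coefficients. -/
private def Sf (h a : R) (ℓ : ℕ) : R :=
  ∑ j ∈ Finset.range (ℓ + 1), a ^ j * h * a ^ (ℓ - j)

private lemma Sf_zero (h a : R) : Sf h a 0 = h := by
  simp [Sf]

private lemma Sf_succ_left (h a : R) (ℓ : ℕ) :
    Sf h a (ℓ + 1) = h * a ^ (ℓ + 1) + a * Sf h a ℓ := by
  rw [Sf, Finset.sum_range_succ']
  simp only [pow_zero, one_mul, Nat.sub_zero, Nat.succ_sub_succ]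
  rw [add_comm, Sf, Finset.mul_sum]
  congr 1
  refine Finset.sum_congr rfl fun j hj => ?_
  rw [pow_succ', mul_assoc, mul_assoc, mul_assoc]

private lemma Sf_succ_right (h a : R) (ℓ : ℕ) :
    Sf h a (ℓ + 1) = Sf h a ℓ * a + a ^ (ℓ + 1) * h := by
  rw [Sf, Finset.sum_range_succ, Nat.sub_self, pow_zero, mul_one, Sf, Finset.sum_mul]
  congr 1
  refine Finset.sum_congr rfl fun j hj => ?_
  rw [Finset.mem_range] at hj
  have hj' : ℓ + 1 - j = (ℓ - j) + 1 := by omega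
  rw [hj', pow_succ, ← mul_assoc]

/-- `d·(h·e) = (h·e)·d + (e − w·h)`. -/
private lemma lem_da (w d e h : R) (hw : ∀ x : R, w * x = x * w)
    (hde : d * e + e * d = w) (hdh : d * h + h * d = 1) :
    d * (h * e) = (h * e) * d + (e - w * h) := by
  have h1 : d * h = 1 - h * d := eq_sub_iff_add_eq.mpr hdh
  have h2 : d * e = w - e * d := eq_sub_iff_add_eq.mpr hde
  calc d * (h * e) = (d * h) * e := by rw [mul_assoc]
    _ = (1 - h * d) * e := by rw [h1]
    _ = e - h * (d * e) := by noncomm_ring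
    _ = e - h * (w - e * d) := by rw [h2]
    _ = (h * e) * d + (e - h * w) := by noncomm_ring
    _ = (h * e) * d + (e - w * h) := by rw [← hw h]

private lemma lem_ae (e h : R) (he2 : e * e = 0) (j : ℕ) :
    (h * e) ^ (j + 1) * e = 0 := by
  rw [pow_succ, mul_assoc, mul_assoc, he2, mul_zero, mul_zero]

/-- Pure-algebra step for the commutator lemma. -/
private lemma pure_Q (w d e h a p q s t : R)
    (hp : d * p = p * d + (e * q - w * s))
    (ha : d * a = a * d + (e - w * h))
    (hpe : p * e = 0)
    (hwp : p * w = w * p)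
    (ht : t = s * a + p * h) :
    d * (p * a) = (p * a) * d + (e * (q * a) - w * t) := by
  rw [ht]
  calc d * (p * a) = (d * p) * a := by rw [mul_assoc]
    _ = (p * d + (e * q - w * s)) * a := by rw [hp]
    _ = p * (d * a) + ((e * q) * a - (w * s) * a) := by noncomm_ring
    _ = p * (a * d + (e - w * h)) + ((e * q) * a - (w * s) * a) := by rw [ha]
    _ = (p * a) * d + p * e - (p * w) * h + ((e * q) * a - (w * s) * a) := by noncomm_ring
    _ = (p * a) * d + 0 - (w * p) * h + ((e * q) * a - (w * s) * a) := by rw [hpe, hwp]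
    _ = (p * a) * d + (e * (q * a) - w * (s * a + p * h)) := by noncomm_ring

/-- `d·a^{j+1} = a^{j+1}·d + (e·a^j − w·S_j)` where `a = h·e`. -/
private lemma lem_Q (w d e h : R) (hw : ∀ x : R, w * x = x * w) (he2 : e * e = 0)
    (hde : d * e + e * d = w) (hdh : d * h + h * d = 1) :
    ∀ j : ℕ, d * (h * e) ^ (j + 1) =
      (h * e) ^ (j + 1) * d + (e * (h * e) ^ j - w * Sf h (h * e) j) := by
  intro j
  induction j with
  | zero =>
      simpa [Sf_zero] using lem_da w d e h hw hde hdh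
  | succ j ih =>
      have hstep := pure_Q w d e h (h * e) ((h * e) ^ (j + 1)) ((h * e) ^ j)
        (Sf h (h * e) j) (Sf h (h * e) (j + 1)) ih (lem_da w d e h hw hde hdh)
        (lem_ae e h he2 j) ((hw ((h * e) ^ (j + 1))).symm) (Sf_succ_right h (h * e) j)
      rw [← pow_succ, ← pow_succ] at hstep
      exact hstep

/-- Pure-algebra step for the main recursion. -/
private lemma pure_L3 (w d e h a p q s : R)
    (h1 : d * h = 1 - h * d)
    (hQp : d * p = p * d + (e * q - w * s))
    (hda : d * a = a * d + (e - w * h))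
    (haq : a * q = p)
    (hhe : h * e = a)
    (hwh : h * w = w * h) :
    d * (h * p + a * s) + (h * p + a * s) * d = a * (d * s + s * d) + e * s := by
  calc d * (h * p + a * s) + (h * p + a * s) * d
      = ((d * h) * p + (h * p) * d) + ((d * a) * s + (a * s) * d) := by noncomm_ring
    _ = ((1 - h * d) * p + (h * p) * d) + ((a * d + (e - w * h)) * s + (a * s) * d) := by
        rw [h1, hda]
    _ = (p + (h * p) * d + a * (d * s) + a * (s * d) + e * s) - (h * (d * p) + (w * h) * s) := by
        noncomm_ring
    _ = (p + (h * p) * d + a * (d * s) + a * (s * d) + e * s)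
          - (h * (p * d + (e * q - w * s)) + (w * h) * s) := by rw [hQp]
    _ = (p + e * s + a * (d * s) + a * (s * d)) - ((h * e) * q + ((w * h) * s - (h * w) * s)) := by
        noncomm_ring
    _ = (p + e * s + a * (d * s) + a * (s * d)) - (p + ((w * h) * s - (w * h) * s)) := by
        rw [hhe, haq, hwh]
    _ = a * (d * s + s * d) + e * s := by noncomm_ring

/-- The recursion `d·S_{m+1} + S_{m+1}·d = a·(d·S_m + S_m·d) + e·S_m`. -/
private lemma lem_L3 (w d e h : R) (hw : ∀ x : R, w * x = x * w) (he2 : e * e = 0)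
    (hde : d * e + e * d = w) (hdh : d * h + h * d = 1) (m : ℕ) :
    d * Sf h (h * e) (m + 1) + Sf h (h * e) (m + 1) * d =
      (h * e) * (d * Sf h (h * e) m + Sf h (h * e) m * d) + e * Sf h (h * e) m := by
  have h1 : d * h = 1 - h * d := eq_sub_iff_add_eq.mpr hdh
  have hstep := pure_L3 w d e h (h * e) ((h * e) ^ (m + 1)) ((h * e) ^ m)
    (Sf h (h * e) m) h1 (lem_Q w d e h hw he2 hde hdh m)
    (lem_da w d e h hw hde hdh) (pow_succ' (h * e) m).symm rfl (hw h).symm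
  rw [← Sf_succ_left] at hstep
  exact hstep

private lemma pure_Pstep (e h a p s : R) (hae : a * e = 0) (hpe : p * e = 0) :
    a * (e * s + s * e) = (h * p + a * s) * e := by
  calc a * (e * s + s * e) = (a * e) * s + (a * s) * e := by noncomm_ring
    _ = 0 * s + (a * s) * e := by rw [hae]
    _ = h * 0 + (a * s) * e := by noncomm_ring
    _ = h * (p * e) + (a * s) * e := by rw [hpe]
    _ = (h * p + a * s) * e := by noncomm_ring

private lemma lem_hae (e h : R) (he2 : e * e = 0) : (h * e) * e = 0 := by
  rw [mul_assoc, he2, mul_zero]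

/-- The key coefficient identity:
`d·S_{m+1} + S_{m+1}·d = e·S_m + S_m·e`. -/
private lemma lem_P (w d e h : R) (hw : ∀ x : R, w * x = x * w) (he2 : e * e = 0)
    (hde : d * e + e * d = w) (hdh : d * h + h * d = 1) :
    ∀ m : ℕ, d * Sf h (h * e) (m + 1) + Sf h (h * e) (m + 1) * d =
      e * Sf h (h * e) m + Sf h (h * e) m * e := by
  intro m
  induction m with
  | zero =>
      rw [lem_L3 w d e h hw he2 hde hdh 0, Sf_zero, hdh, mul_one, add_comm]
  | succ m ih =>
      rw [lem_L3 w d e h hw he2 hde hdh (m + 1), ih,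
        pure_Pstep e h (h * e) ((h * e) ^ (m + 1)) (Sf h (h * e) m)
          (lem_hae e h he2) (lem_ae e h he2 m),
        ← Sf_succ_left, add_comm]

/-- Expansion of `(C d + C e·X)·(C p·X^ℓ)`. -/
private lemma lem_expL (d e p : R) (ℓ : ℕ) :
    (C d + C e * X) * (C p * X ^ ℓ) = C (d * p) * X ^ ℓ + C (e * p) * X ^ (ℓ + 1) := by
  rw [add_mul]
  congr 1
  · rw [← mul_assoc, ← C_mul]
  · rw [mul_assoc (C e) X, ← mul_assoc X (C p), X_mul_C, mul_assoc (C p) X, ← pow_succ',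
      ← mul_assoc, ← C_mul]

/-- Expansion of `(C p·X^ℓ)·(C d + C e·X)`. -/
private lemma lem_expR (d e p : R) (ℓ : ℕ) :
    (C p * X ^ ℓ) * (C d + C e * X) = C (p * d) * X ^ ℓ + C (p * e) * X ^ (ℓ + 1) := by
  rw [mul_add]
  congr 1
  · rw [mul_assoc, X_pow_mul, ← mul_assoc, ← C_mul]
  · rw [mul_assoc, ← mul_assoc (X ^ ℓ) (C e) X, X_pow_mul, mul_assoc (C e), ← pow_succ,
      ← mul_assoc, ← C_mul]

private lemma pure_sign (c d e s t : R) (hc : ∀ x : R, c * x = x * c)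
    (hP : d * t + t * d = e * s + s * e) :
    d * ((-c) * t) + ((-c) * t) * d = -(e * (c * s) + (c * s) * e) := by
  have h1 : d * ((-c) * t) = (-c) * (d * t) := by
    simp only [neg_mul, mul_neg]
    rw [← mul_assoc, ← mul_assoc, ← hc d]
  have h2 : ((-c) * t) * d = (-c) * (t * d) := by rw [mul_assoc]
  have h3 : c * (e * s) = e * (c * s) := by rw [← mul_assoc, hc e, mul_assoc]
  calc d * ((-c) * t) + ((-c) * t) * d = (-c) * (d * t + t * d) := by rw [h1, h2, mul_add]
    _ = (-c) * (e * s + s * e) := by rw [hP]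
    _ = -(c * (e * s) + (c * s) * e) := by noncomm_ring
    _ = -(e * (c * s) + (c * s) * e) := by rw [h3]

end CurvedAux

/-- If `d` is a differential with contracting homotopy `h` (`d*h + h*d = 1`),
`e` is a curved deformation term (`e² = 0`, `d*e + e*d = w` with `w` central) and
`(h*e)^N = 0`, then in `R[u]` the element `Δ = d + e·u` has the two-sided homotopy
inverse `H = Σ_{ℓ<2N} H_ℓ u^ℓ` with
`H_ℓ = (−1)^ℓ Σ_{j₁+j₂=ℓ} (he)^{j₁} h (he)^{j₂}`, i.e. `Δ*H + H*Δ = 1`. -/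
theorem curved_deformation_contractible_ring
    {R : Type*} [Ring R] (w d e h : R) (N : ℕ)
    (hw : ∀ x : R, w * x = x * w)
    (hd2 : d * d = 0) (he2 : e * e = 0)
    (hde : d * e + e * d = w)
    (hdh : d * h + h * d = 1)
    (hN : (h * e) ^ N = 0) :
    (C d + C e * X) *
        (∑ ℓ ∈ Finset.range (2 * N),
          C ((-1 : R) ^ ℓ *
            ∑ j ∈ Finset.range (ℓ + 1), (h * e) ^ j * h * (h * e) ^ (ℓ - j)) * X ^ ℓ) +
      (∑ ℓ ∈ Finset.range (2 * N),
          C ((-1 : R) ^ ℓ *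
            ∑ j ∈ Finset.range (ℓ + 1), (h * e) ^ j * h * (h * e) ^ (ℓ - j)) * X ^ ℓ) *
        (C d + C e * X) = 1 := by
  rcases Nat.eq_zero_or_pos N with hN0 | hN1
  · subst hN0
    have h01 : (0 : R) = 1 := by simpa using hN.symm
    haveI : Subsingleton R := subsingleton_of_zero_eq_one h01
    exact Subsingleton.elim _ _
  · obtain ⟨M, hM⟩ : ∃ M, 2 * N = M + 1 := ⟨2 * N - 1, by omega⟩
    -- the signed coefficients
    set Hc : ℕ → R := fun ℓ => (-1 : R) ^ ℓ * Sf h (h * e) ℓ with hHc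
    have hrw : ∀ ℓ : ℕ,
        ((-1 : R) ^ ℓ * ∑ j ∈ Finset.range (ℓ + 1), (h * e) ^ j * h * (h * e) ^ (ℓ - j))
          = Hc ℓ := fun ℓ => rfl
    simp only [hrw, hM]
    -- the three coefficient identities
    have key0 : d * Hc 0 + Hc 0 * d = 1 := by
      simp only [hHc, pow_zero, one_mul, Sf_zero]
      exact hdh
    have keyS : ∀ ℓ : ℕ, d * Hc (ℓ + 1) + Hc (ℓ + 1) * d = -(e * Hc ℓ + Hc ℓ * e) := by
      intro ℓ
      have hpow : (-1 : R) ^ (ℓ + 1) = -((-1 : R) ^ ℓ) := by rw [pow_succ, mul_neg_one]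
      have hc : ∀ x : R, (-1 : R) ^ ℓ * x = x * (-1 : R) ^ ℓ := fun x =>
        ((Commute.neg_one_left x).pow_left ℓ).eq
      have := pure_sign ((-1 : R) ^ ℓ) d e (Sf h (h * e) ℓ) (Sf h (h * e) (ℓ + 1)) hc
        (lem_P w d e h hw he2 hde hdh ℓ)
      simpa only [hHc, hpow] using this
    have hSM : Sf h (h * e) M = 0 := by
      apply Finset.sum_eq_zero
      intro j hj
      rw [Finset.mem_range] at hj
      rcases le_or_gt N j with hc | hc
      · obtain ⟨k, rfl⟩ : ∃ k, j = N + k := ⟨j - N, by omega⟩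
        rw [pow_add, hN, zero_mul, zero_mul, zero_mul]
      · obtain ⟨k, hk⟩ : ∃ k, M - j = N + k := ⟨M - j - N, by omega⟩
        rw [hk, pow_add, hN, zero_mul, mul_zero]
    have keyT : e * Hc M + Hc M * e = 0 := by
      simp [hHc, hSM]
    -- expand the products
    rw [Finset.mul_sum, Finset.sum_mul]
    simp only [lem_expL, lem_expR]
    rw [Finset.sum_add_distrib, Finset.sum_add_distrib]
    have h1 : (∑ ℓ ∈ Finset.range (M + 1), C (d * Hc ℓ) * X ^ ℓ) +
        (∑ ℓ ∈ Finset.range (M + 1), C (Hc ℓ * d) * X ^ ℓ) =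
        ∑ ℓ ∈ Finset.range (M + 1), C (d * Hc ℓ + Hc ℓ * d) * X ^ ℓ := by
      rw [← Finset.sum_add_distrib]
      refine Finset.sum_congr rfl fun ℓ _ => ?_
      rw [C_add, add_mul]
    have h2 : (∑ ℓ ∈ Finset.range (M + 1), C (e * Hc ℓ) * X ^ (ℓ + 1)) +
        (∑ ℓ ∈ Finset.range (M + 1), C (Hc ℓ * e) * X ^ (ℓ + 1)) =
        ∑ ℓ ∈ Finset.range (M + 1), C (e * Hc ℓ + Hc ℓ * e) * X ^ (ℓ + 1) := by
      rw [← Finset.sum_add_distrib]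
      refine Finset.sum_congr rfl fun ℓ _ => ?_
      rw [C_add, add_mul]
    have hA : (∑ ℓ ∈ Finset.range (M + 1), C (d * Hc ℓ + Hc ℓ * d) * X ^ ℓ) =
        1 - ∑ ℓ ∈ Finset.range M, C (e * Hc ℓ + Hc ℓ * e) * X ^ (ℓ + 1) := by
      rw [Finset.sum_range_succ']
      simp only [keyS, key0, pow_zero, mul_one, map_one, C_neg, neg_mul]
      rw [Finset.sum_neg_distrib]
      abel
    have hB : (∑ ℓ ∈ Finset.range (M + 1), C (e * Hc ℓ + Hc ℓ * e) * X ^ (ℓ + 1)) =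
        ∑ ℓ ∈ Finset.range M, C (e * Hc ℓ + Hc ℓ * e) * X ^ (ℓ + 1) := by
      rw [Finset.sum_range_succ, keyT]
      simp
    calc (∑ ℓ ∈ Finset.range (M + 1), C (d * Hc ℓ) * X ^ ℓ) +
          (∑ ℓ ∈ Finset.range (M + 1), C (e * Hc ℓ) * X ^ (ℓ + 1)) +
          ((∑ ℓ ∈ Finset.range (M + 1), C (Hc ℓ * d) * X ^ ℓ) +
          (∑ ℓ ∈ Finset.range (M + 1), C (Hc ℓ * e) * X ^ (ℓ + 1)))
        = ((∑ ℓ ∈ Finset.range (M + 1), C (d * Hc ℓ) * X ^ ℓ) +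
          (∑ ℓ ∈ Finset.range (M + 1), C (Hc ℓ * d) * X ^ ℓ)) +
          ((∑ ℓ ∈ Finset.range (M + 1), C (e * Hc ℓ) * X ^ (ℓ + 1)) +
          (∑ ℓ ∈ Finset.range (M + 1), C (Hc ℓ * e) * X ^ (ℓ + 1))) := by abel
      _ = (1 - ∑ ℓ ∈ Finset.range M, C (e * Hc ℓ + Hc ℓ * e) * X ^ (ℓ + 1)) +
          (∑ ℓ ∈ Finset.range M, C (e * Hc ℓ + Hc ℓ * e) * X ^ (ℓ + 1)) := by
          rw [h1, h2, hA, hB]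
      _ = 1 := by abel
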